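/- Let N ≥ 4 be an integer and m > 1, and set σ_c = 2(N−1)(m−1)/(3m+1). There exists σ0 ∈ (0, σ_c) such that for every σ ∈ (0, σ0), every good profile with interface for the profile ODE satisfies the initial behavior (P1): f(0) > 0 and f'(0) = 0. -/

import Mathlib

open Set

/-- One-sided derivative (on `[0,∞)`) of the `m`-th power of the profile. -/
noncomputable def Dm (m : ℝ) (f : ℝ → ℝ) : ℝ → ℝ :=
  derivWithin (fun ξ => f ξ ^ m) (Ici 0)

/-- Second one-sided derivative (on `[0,∞)`) of the `m`-th power of the profile. -/
noncomputable def D2m (m : ℝ) (f : ℝ → ℝ) : ℝ → ℝ :=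
  derivWithin (Dm m f) (Ici 0)

/-- A good profile for the ODE
`(f^m)'' + ((N-1)/ξ)(f^m)' - f/(m-1) + ξ^σ f^m = 0`:
a continuous nonnegative function on `[0,∞)` whose `m`-th power is twice
differentiable, solving the ODE wherever `f > 0`, and satisfying one of the
initial behaviors (P1), (P2), (P3). -/
structure GoodProfile (m σ N : ℝ) (f : ℝ → ℝ) : Prop where
  cont : ContinuousOn f (Ici 0)
  nonneg : ∀ ξ, 0 ≤ ξ → 0 ≤ f ξ
  diff1 : ∀ ξ, 0 ≤ ξ → DifferentiableWithinAt ℝ (fun ξ => f ξ ^ m) (Ici 0) ξ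
  diff2 : ∀ ξ, 0 ≤ ξ → DifferentiableWithinAt ℝ (Dm m f) (Ici 0) ξ
  ode : ∀ ξ, 0 < ξ → 0 < f ξ →
    D2m m f ξ + ((N - 1) / ξ) * Dm m f ξ - f ξ / (m - 1) + ξ ^ σ * f ξ ^ m = 0
  init : (0 < f 0 ∧ HasDerivWithinAt f 0 (Ici 0) 0)
    ∨ (f 0 = 0 ∧ Dm m f 0 = 0)
    ∨ (∃ ξ0 > (0:ℝ), f ξ0 = 0 ∧ Dm m f ξ0 = 0 ∧
        ∃ ε > (0:ℝ), ∀ ξ ∈ Ioo ξ0 (ξ0 + ε), 0 < f ξ)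

/-- A good profile has an interface at `η ∈ (0,∞)` if `f(η) = 0`, `(f^m)'(η) = 0`
and `f > 0` on a left-neighborhood of `η`. -/
def HasInterfaceAt (m : ℝ) (f : ℝ → ℝ) (η : ℝ) : Prop :=
  0 < η ∧ f η = 0 ∧ Dm m f η = 0 ∧ ∃ ε > (0:ℝ), ∀ ξ ∈ Ioo (η - ε) η, 0 < f ξ

namespace GoodProfile

variable {m σ N : ℝ} {f : ℝ → ℝ}

lemma hasDerivAt_G (hgp : GoodProfile m σ N f) {ξ : ℝ} (hξ : 0 < ξ) :
    HasDerivAt (fun t => f t ^ m) (Dm m f ξ) ξ := by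
  have hmem : Ici (0:ℝ) ∈ nhds ξ := Ici_mem_nhds hξ
  have h := ((hgp.diff1 ξ hξ.le).differentiableAt hmem).hasDerivAt
  rwa [show Dm m f ξ = deriv (fun t => f t ^ m) ξ from derivWithin_of_mem_nhds hmem]

lemma hasDerivAt_D (hgp : GoodProfile m σ N f) {ξ : ℝ} (hξ : 0 < ξ) :
    HasDerivAt (Dm m f) (D2m m f ξ) ξ := by
  have hmem : Ici (0:ℝ) ∈ nhds ξ := Ici_mem_nhds hξ
  have h := ((hgp.diff2 ξ hξ.le).differentiableAt hmem).hasDerivAt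
  rwa [show D2m m f ξ = deriv (Dm m f) ξ from derivWithin_of_mem_nhds hmem]

lemma Dm_eq_zero_of_zero (hgp : GoodProfile m σ N f) (hm : 1 < m) {ζ : ℝ}
    (hζ : 0 < ζ) (h0 : f ζ = 0) : Dm m f ζ = 0 := by
  have hm0 : m ≠ 0 := by positivity
  have hmem : Ici (0:ℝ) ∈ nhds ζ := Ici_mem_nhds hζ
  have hmin : IsLocalMin (fun t => f t ^ m) ζ := by
    filter_upwards [eventually_gt_nhds hζ] with t ht
    have h1 : (0:ℝ) ≤ f t ^ m := Real.rpow_nonneg (hgp.nonneg t ht.le) m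
    simpa [h0, Real.zero_rpow hm0] using h1
  have hd := hmin.deriv_eq_zero
  rw [show Dm m f ζ = deriv (fun t => f t ^ m) ζ from derivWithin_of_mem_nhds hmem]
  exact hd

lemma no_bump (hgp : GoodProfile m σ N f) (hm : 1 < m) (hσ : 0 < σ)
    (hσ' : σ < (m - 1) / (m + 1)) (hN : (4:ℝ) ≤ N) {a b : ℝ} (ha : 0 ≤ a) (hab : a < b)
    (hfa : f a = 0) (hfb : f b = 0) (hDb : Dm m f b = 0)
    (hpos : ∀ ξ ∈ Ioo a b, 0 < f ξ) : False := by
  have hm0 : m ≠ 0 := by positivity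
  have hm1 : (0:ℝ) < m - 1 := by linarith
  have hm1' : (0:ℝ) < m + 1 := by linarith
  have hm2 : (0:ℝ) < m ^ 2 - 1 := by nlinarith
  have hσ1 : σ < 1 := lt_of_lt_of_le hσ' (by rw [div_le_one hm1']; linarith)
  set D : ℝ → ℝ := Dm m f with hDdef
  set D2 : ℝ → ℝ := D2m m f with hD2def
  set U : ℝ → ℝ := fun t => t ^ 2 * D t ^ 2 / 2
      + (1 + σ/2) * (t * (f t ^ m) * D t + (N - 2) * (f t ^ m) ^ 2 / 2)
      + t ^ (σ + 2) * (f t ^ m) ^ 2 / 2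
      - m / (m ^ 2 - 1) * (t ^ 2 * (f t ^ m) ^ ((m + 1)/m)) with hUdef
  have hsub : Icc a b ⊆ Ici (0:ℝ) := fun x hx => le_trans ha hx.1
  have hGc : ContinuousOn (fun t => f t ^ m) (Icc a b) :=
    fun x hx => ((hgp.diff1 x (hsub hx)).continuousWithinAt).mono hsub
  have hDc : ContinuousOn D (Icc a b) :=
    fun x hx => ((hgp.diff2 x (hsub hx)).continuousWithinAt).mono hsub
  have hUc : ContinuousOn U (Icc a b) := by
    have h1 : ContinuousOn (fun t : ℝ => t ^ (σ + 2)) (Icc a b) := fun x hx =>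
      (Real.continuousAt_rpow_const x (σ + 2) (Or.inr (by linarith))).continuousWithinAt
    have h2 : ContinuousOn (fun t => (f t ^ m) ^ ((m + 1)/m)) (Icc a b) :=
      hGc.rpow_const (fun x hx => Or.inr (by positivity))
    exact ((((continuousOn_id.pow 2).mul (hDc.pow 2)).div_const 2).add
        ((((continuousOn_id.mul hGc).mul hDc).add
          ((continuousOn_const.mul (hGc.pow 2)).div_const 2)).const_smul (1 + σ/2)) |>.add
        ((h1.mul (hGc.pow 2)).div_const 2)).sub
        (((continuousOn_id.pow 2).mul h2).const_smul (m / (m ^ 2 - 1)))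
  have hGa : f a ^ m = 0 := by rw [hfa]; exact Real.zero_rpow hm0
  have hGb : f b ^ m = 0 := by rw [hfb]; exact Real.zero_rpow hm0
  have hq0 : (m + 1)/m ≠ 0 := by positivity
  have hUa : U a = 0 := by
    rcases eq_or_lt_of_le ha with h | h
    · subst h
      simp [hUdef, hGa, Real.zero_rpow hq0, Real.zero_rpow (by linarith : σ + 2 ≠ 0)]
    · have hDa : D a = 0 := hgp.Dm_eq_zero_of_zero hm h hfa
      simp [hUdef, hGa, hDa, Real.zero_rpow hq0]
  have hUb : U b = 0 := by
    simp [hUdef, hGb, hDb, Real.zero_rpow hq0]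
  have hderiv : ∀ x ∈ Ioo a b, HasDerivAt U
      ((3 - N + σ/2) * (x * D x ^ 2)
        + (σ/(2*(m-1)) - 1/(m+1)) * (x * (f x ^ m) * f x)) x := by
    intro x hx
    have hx0 : 0 < x := lt_of_le_of_lt ha hx.1
    have hfx : 0 < f x := hpos x hx
    have hGx : 0 < f x ^ m := Real.rpow_pos_of_pos hfx m
    have hG' : HasDerivAt (fun t => f t ^ m) (D x) x := hgp.hasDerivAt_G hx0
    have hD' : HasDerivAt D (D2 x) x := hgp.hasDerivAt_D hx0
    have t1 := ((hasDerivAt_pow 2 x).mul (hD'.pow 2)).div_const 2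
    have i1 := ((hasDerivAt_id x).mul hG').mul hD'
    have i2 := ((hG'.pow 2).const_mul (N - 2)).div_const 2
    have t2 := (i1.add i2).const_mul (1 + σ/2)
    have t3 := ((Real.hasDerivAt_rpow_const (p := σ + 2) (Or.inl hx0.ne')).mul
        (hG'.pow 2)).div_const 2
    have t4 := ((hasDerivAt_pow 2 x).mul
        (hG'.rpow_const (p := (m + 1)/m) (Or.inl hGx.ne'))).const_mul (m / (m ^ 2 - 1))
    have hU := ((t1.add t2).add t3).sub t4
    refine hU.congr_deriv ?_
    have e2 : x ^ (σ + 2 - 1) = x ^ σ * x := by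
      rw [show σ + 2 - 1 = σ + 1 by ring, Real.rpow_add hx0, Real.rpow_one]
    have e3 : x ^ (σ + 2) = x ^ σ * x ^ (2:ℕ) := by
      rw [show σ + 2 = σ + ((2:ℕ):ℝ) by norm_num, Real.rpow_add hx0, Real.rpow_natCast]
    have e4 : (f x ^ m) ^ ((m + 1)/m) = f x ^ m * f x := by
      rw [← Real.rpow_mul hfx.le, show m * ((m+1)/m) = m + 1 by field_simp,
        Real.rpow_add hfx, Real.rpow_one]
    have e5 : (f x ^ m) ^ ((m + 1)/m - 1) = f x := by
      rw [show (m+1)/m - 1 = 1/m by field_simp; ring, ← Real.rpow_mul hfx.le,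
        mul_one_div_cancel hm0, Real.rpow_one]
    have hode := hgp.ode x hx0 hfx
    have hD2v : D2 x = f x / (m - 1) - x ^ σ * f x ^ m - (N - 1)/x * D x := by
      rw [hD2def, hDdef]; linarith [hode]
    rw [e2, e3, e4, e5, hD2v]
    push_cast
    simp only [Pi.mul_apply, Pi.pow_apply, id_eq]
    field_simp
    ring
  have hanti : StrictAntiOn U (Icc a b) := by
    apply strictAntiOn_of_deriv_neg (convex_Icc a b) hUc
    intro x hx
    rw [interior_Icc] at hx
    rw [(hderiv x hx).deriv]
    have hx0 : 0 < x := lt_of_le_of_lt ha hx.1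
    have hfx : 0 < f x := hpos x hx
    have hGx : 0 < f x ^ m := Real.rpow_pos_of_pos hfx m
    have hc1 : 3 - N + σ/2 < 0 := by linarith
    have hc2 : σ/(2*(m-1)) - 1/(m+1) < 0 := by
      rw [sub_neg, div_lt_div_iff₀ (by linarith) hm1']
      have := (lt_div_iff₀ hm1').mp hσ'
      nlinarith
    have h1 : (3 - N + σ/2) * (x * D x ^ 2) ≤ 0 :=
      mul_nonpos_of_nonpos_of_nonneg hc1.le (mul_nonneg hx0.le (sq_nonneg _))
    have h2 : (σ/(2*(m-1)) - 1/(m+1)) * (x * (f x ^ m) * f x) < 0 :=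
      mul_neg_of_neg_of_pos hc2 (mul_pos (mul_pos hx0 hGx) hfx)
    linarith
  have := hanti ⟨le_rfl, hab.le⟩ ⟨hab.le, le_rfl⟩ hab
  rw [hUa, hUb] at this
  exact lt_irrefl 0 this

set_option maxHeartbeats 1000000 in
lemma Dm_zero_eq_zero (hgp : GoodProfile m σ N f) (hm : 1 < m) (hσ : 0 < σ)
    (hN : (4:ℝ) ≤ N) {η : ℝ} (hη : 0 < η)
    (hpos : ∀ ξ, 0 ≤ ξ → ξ < η → 0 < f ξ) : Dm m f 0 = 0 := by
  by_contra hL0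
  set D : ℝ → ℝ := Dm m f with hDdef
  set L : ℝ := D 0 with hLdef
  have hL : L ≠ 0 := hL0
  have habsL : 0 < |L| := abs_pos.mpr hL
  have hm1 : (0:ℝ) < m - 1 := by linarith
  set δ : ℝ := min (η/2) 1 with hδdef
  have hδ0 : 0 < δ := lt_min (by linarith) one_pos
  have hδη : δ < η := lt_of_le_of_lt (min_le_left _ _) (by linarith)
  have hδ1 : δ ≤ 1 := min_le_right _ _
  obtain ⟨C₁, hC₁⟩ := (isCompact_Icc : IsCompact (Icc (0:ℝ) δ)).exists_bound_of_continuousOn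
    (hgp.cont.mono (fun x hx => hx.1))
  have hC₁0 : 0 ≤ C₁ := le_trans (norm_nonneg _) (hC₁ 0 ⟨le_rfl, hδ0.le⟩)
  set C : ℝ := C₁/(m-1) + C₁ ^ m with hCdef
  have hC0 : 0 ≤ C := add_nonneg (div_nonneg hC₁0 hm1.le) (Real.rpow_nonneg hC₁0 m)
  have hDcont : ContinuousWithinAt D (Ici 0) 0 := (hgp.diff2 0 le_rfl).continuousWithinAt
  obtain ⟨δ₂, hδ₂0, hδ₂⟩ := Metric.continuousWithinAt_iff.mp hDcont (|L|/8) (by positivity)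
  set ξ : ℝ := min (min (δ/2) (δ₂/2)) (|L|/(2*(C+1))) with hξdef
  have hξ0 : 0 < ξ := lt_min (lt_min (by linarith) (by linarith)) (by positivity)
  have hξδ : ξ ≤ δ/2 := le_trans (min_le_left _ _) (min_le_left _ _)
  have hξδ₂ : ξ < δ₂ := lt_of_le_of_lt (le_trans (min_le_left _ _) (min_le_right _ _))
    (by linarith)
  have hξL : ξ ≤ |L|/(2*(C+1)) := min_le_right _ _
  have hξL' : ξ * (2*(C+1)) ≤ |L| := (le_div_iff₀ (by positivity)).mp hξL
  clear_value L δ C ξ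
  have hCξ : C * ξ ≤ |L|/2 := by
    have h2 : ξ * (2*(C+1)) = 2*(C*ξ) + 2*ξ := by ring
    rw [h2] at hξL'
    linarith
  have hDnear : ∀ x, 0 ≤ x → x ≤ ξ → |D x - L| < |L|/8 := by
    intro x hx hx'
    have h := hδ₂ (mem_Ici.mpr hx)
      (by rw [Real.dist_eq, sub_zero, abs_of_nonneg hx]; linarith)
    rw [Real.dist_eq, ← hLdef] at h
    exact h
  have hDcIcc : ContinuousOn D (Icc (ξ/2) ξ) := by
    rw [hDdef]
    exact fun x hx => ((hgp.diff2 x (le_trans (by linarith) hx.1)).continuousWithinAt).mono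
      (fun y hy => le_trans (by linarith) hy.1)
  obtain ⟨θ, hθ, hslope⟩ := exists_hasDerivAt_eq_slope D (D2m m f) (by linarith : ξ/2 < ξ)
    hDcIcc (fun x hx => by rw [hDdef]; exact hgp.hasDerivAt_D (lt_trans (by linarith) hx.1))
  have hθ0 : 0 < θ := lt_trans (by linarith) hθ.1
  have hθhalf : ξ/2 < θ := hθ.1
  have hθξ : θ < ξ := hθ.2
  have hθη : θ < η := by linarith
  have hfθ : 0 < f θ := hpos θ hθ0.le hθη
  have hode := hgp.ode θ hθ0 hfθ
  rw [← hDdef] at hode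
  clear_value D
  have hfθC : f θ ≤ C₁ := le_trans (le_abs_self _) (hC₁ θ ⟨hθ0.le, by linarith⟩)
  have hθ1 : θ ≤ 1 := by linarith
  have hθσ : θ ^ σ ≤ 1 := Real.rpow_le_one hθ0.le hθ1 hσ.le
  have hθσ0 : 0 ≤ θ ^ σ := Real.rpow_nonneg hθ0.le σ
  have hGθ : f θ ^ m ≤ C₁ ^ m := Real.rpow_le_rpow (hgp.nonneg θ hθ0.le) hfθC (by linarith)
  have hGθ0 : 0 ≤ f θ ^ m := Real.rpow_nonneg (hgp.nonneg θ hθ0.le) m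
  set R : ℝ := f θ/(m-1) - θ ^ σ * f θ ^ m with hRdef
  clear_value R
  have hfdiv : f θ/(m-1) ≤ C₁/(m-1) := by gcongr
  have hfdiv0 : 0 ≤ f θ/(m-1) := div_nonneg hfθ.le hm1.le
  have hprod : θ ^ σ * f θ ^ m ≤ C₁ ^ m := by
    have h := mul_le_mul hθσ hGθ hGθ0 zero_le_one
    rwa [one_mul] at h
  have hprod0 : 0 ≤ θ ^ σ * f θ ^ m := mul_nonneg hθσ0 hGθ0
  have hR1 : R ≤ C := by rw [hRdef, hCdef]; linarith
  have hR2 : -C ≤ R := by rw [hRdef, hCdef]; linarith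
  -- slope equation
  rw [eq_div_iff (by linarith : ξ - ξ/2 ≠ 0)] at hslope
  -- hslope : D2m m f θ * (ξ - ξ/2) = D ξ - D (ξ/2)
  have hD2v : D2m m f θ = R - (N - 1)/θ * D θ := by rw [hRdef]; linarith [hode]
  have hkey : (D ξ - D (ξ/2)) * θ = (R * θ - (N - 1) * D θ) * (ξ/2) := by
    rw [← hslope, hD2v]
    field_simp
    ring
  have hDθ := hDnear θ hθ0.le hθξ.le
  have hDξ := hDnear ξ hξ0.le le_rfl
  have hDh := hDnear (ξ/2) (by linarith) (by linarith)
  rw [abs_sub_lt_iff] at hDθ hDξ hDh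
  rcases hL.lt_or_gt with hLneg | hLpos
  · -- L < 0
    have habs : |L| = -L := abs_of_neg hLneg
    rw [habs] at hDθ hDξ hDh hCξ
    have hDθub : D θ < 7*L/8 := by linarith [hDθ.1]
    have hDθ0 : D θ ≤ 0 := by linarith
    have h1 : (-C) * θ ≤ R * θ := mul_le_mul_of_nonneg_right hR2 hθ0.le
    have h2 : C * θ ≤ C * ξ := mul_le_mul_of_nonneg_left hθξ.le hC0
    have h3 : (N - 1) * D θ ≤ 3 * D θ :=
      mul_le_mul_of_nonpos_right (by linarith : (3:ℝ) ≤ N - 1) hDθ0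
    have h4 : 3 * D θ ≤ 21*L/8 := by linarith
    have hsum : L/2 - 21*L/8 ≤ R * θ - (N - 1) * D θ := by
      linarith only [h1, h2, h3, h4, hCξ]
    have hrhs : (L/2 - 21*L/8) * (ξ/2) ≤ (R * θ - (N - 1) * D θ) * (ξ/2) :=
      mul_le_mul_of_nonneg_right hsum (by linarith)
    have hlhs1 : D ξ - D (ξ/2) ≤ -(L/4) := by linarith [hDξ.1, hDh.2]
    have hlhs2 : (D ξ - D (ξ/2)) * θ ≤ (-(L/4)) * θ :=
      mul_le_mul_of_nonneg_right hlhs1 hθ0.le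
    have hlhs3 : (-(L/4)) * θ ≤ (-(L/4)) * ξ :=
      mul_le_mul_of_nonneg_left hθξ.le (by linarith : (0:ℝ) ≤ -(L/4))
    have hLξ : L * ξ < 0 := mul_neg_of_neg_of_pos hLneg hξ0
    linarith only [hkey, hrhs, hlhs2, hlhs3, hLξ]
  · -- 0 < L
    have habs : |L| = L := abs_of_pos hLpos
    rw [habs] at hDθ hDξ hDh hCξ
    have hDθlb : 7*L/8 < D θ := by linarith [hDθ.2]
    have hDθ0 : 0 ≤ D θ := by linarith
    have h1 : R * θ ≤ C * θ := mul_le_mul_of_nonneg_right hR1 hθ0.le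
    have h2 : C * θ ≤ C * ξ := mul_le_mul_of_nonneg_left hθξ.le hC0
    have h3 : 3 * D θ ≤ (N - 1) * D θ :=
      mul_le_mul_of_nonneg_right (by linarith : (3:ℝ) ≤ N - 1) hDθ0
    have h4 : 21*L/8 ≤ 3 * D θ := by linarith
    have hsum : R * θ - (N - 1) * D θ ≤ L/2 - 21*L/8 := by
      linarith only [h1, h2, h3, h4, hCξ]
    have hrhs : (R * θ - (N - 1) * D θ) * (ξ/2) ≤ (L/2 - 21*L/8) * (ξ/2) :=
      mul_le_mul_of_nonneg_right hsum (by linarith)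
    have hlhs1 : -(L/4) ≤ D ξ - D (ξ/2) := by linarith [hDξ.2, hDh.1]
    have hlhs2 : (-(L/4)) * θ ≤ (D ξ - D (ξ/2)) * θ :=
      mul_le_mul_of_nonneg_right hlhs1 hθ0.le
    have hlhs3 : (-(L/4)) * ξ ≤ (-(L/4)) * θ :=
      mul_le_mul_of_nonpos_left hθξ.le (by linarith : -(L/4) ≤ 0)
    have hLξ : 0 < L * ξ := mul_pos hLpos hξ0
    linarith only [hkey, hrhs, hlhs2, hlhs3, hLξ]
end GoodProfile

/-- Theorem 1.3, first item: for `N ≥ 4`, `m > 1`, there is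
`σ0 ∈ (0, σ_c)` such that for every `σ ∈ (0, σ0)` every good profile with
interface has initial behavior (P1): `f(0) > 0` and `f'(0) = 0`. -/
theorem goodProfile_with_interface_P1_for_small_sigma
    (N : ℕ) (hN : 4 ≤ N) (m : ℝ) (hm : 1 < m) :
    ∃ σ0 : ℝ, 0 < σ0 ∧ σ0 < 2 * ((N : ℝ) - 1) * (m - 1) / (3 * m + 1) ∧
      ∀ σ : ℝ, 0 < σ → σ < σ0 →
        ∀ f η, GoodProfile m σ (N : ℝ) f → HasInterfaceAt m f η →
          0 < f 0 ∧ HasDerivWithinAt f 0 (Ici 0) 0 := by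

  have hm1 : (0:ℝ) < m - 1 := by linarith
  have hm1' : (0:ℝ) < m + 1 := by linarith
  have hN4 : (4:ℝ) ≤ (N : ℝ) := by exact_mod_cast hN
  refine ⟨(m - 1)/(m + 1), by positivity, ?_, ?_⟩
  · rw [div_lt_div_iff₀ hm1' (by linarith)]
    have h6 : 6*((m-1)*(m+1)) ≤ 2*((N:ℝ)-1)*((m-1)*(m+1)) :=
      mul_le_mul_of_nonneg_right (by linarith) (le_of_lt (mul_pos hm1 hm1'))
    nlinarith [mul_pos hm1 (show (0:ℝ) < 3*m+5 by linarith)]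
  · intro σ hσ0 hσ1 f η hgp hint
    obtain ⟨hη, hfη, hDη, ε, hε, hposL⟩ := hint
    set ε₁ : ℝ := min ε (η/2) with hε₁def
    have hε₁0 : 0 < ε₁ := lt_min hε (by linarith)
    have hε₁η : ε₁ ≤ η/2 := min_le_right _ _
    have hε₁ε : ε₁ ≤ ε := min_le_left _ _
    have hposL' : ∀ ξ ∈ Ioo (η - ε₁) η, 0 < f ξ := fun ξ hξ =>
      hposL ξ ⟨by linarith [hξ.1], hξ.2⟩
    -- no zero of f in [0, η - ε₁]
    have hnz : ∀ ζ ∈ Icc (0:ℝ) (η - ε₁), f ζ ≠ 0 := by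
      by_contra hcon
      push_neg at hcon
      obtain ⟨ζ, hζmem, hζ⟩ := hcon
      set S : Set ℝ := {x | x ∈ Icc (0:ℝ) (η - ε₁) ∧ f x = 0} with hSdef
      have hSne : S.Nonempty := ⟨ζ, hζmem, hζ⟩
      have hSc : IsClosed S := by
        have hrw : S = Icc (0:ℝ) (η - ε₁) ∩ f ⁻¹' {0} := by
          ext x; simp [hSdef]
        rw [hrw]
        exact ContinuousOn.preimage_isClosed_of_isClosed
          (hgp.cont.mono (fun x hx => hx.1)) isClosed_Icc isClosed_singleton
      have hSbdd : BddAbove S := ⟨η - ε₁, fun x hx => hx.1.2⟩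
      have haS : sSup S ∈ S := hSc.csSup_mem hSne hSbdd
      set a : ℝ := sSup S
      have ha0 : 0 ≤ a := haS.1.1
      have haup : a ≤ η - ε₁ := haS.1.2
      have haη : a < η := by linarith
      have hb : ∀ x ∈ Ioo a η, 0 < f x := by
        intro x hx
        rcases le_or_gt x (η - ε₁) with h | h
        · have hx0 : 0 ≤ x := le_trans ha0 hx.1.le
          rcases (hgp.nonneg x hx0).lt_or_eq with h' | h'
          · exact h'
          · exact absurd (le_csSup hSbdd ⟨⟨hx0, h⟩, h'.symm⟩) (not_le.mpr hx.1)
        · exact hposL' x ⟨by linarith, hx.2⟩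
      exact hgp.no_bump hm hσ0 hσ1 hN4 ha0 haη haS.2 hfη hDη hb
    have hpos0 : ∀ ξ, 0 ≤ ξ → ξ < η → 0 < f ξ := by
      intro ξ h0 hξη
      rcases le_or_gt ξ (η - ε₁) with h | h
      · exact (hgp.nonneg ξ h0).lt_of_ne' (hnz ξ ⟨h0, h⟩)
      · exact hposL' ξ ⟨by linarith, hξη⟩
    have hf0 : 0 < f 0 := hpos0 0 le_rfl hη
    have hD0 : Dm m f 0 = 0 := hgp.Dm_zero_eq_zero hm hσ0 hN4 hη hpos0
    refine ⟨hf0, ?_⟩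
    have hG0 : HasDerivWithinAt (fun t => f t ^ m) 0 (Ici 0) 0 := by
      have h := (hgp.diff1 0 le_rfl).hasDerivWithinAt
      rwa [show derivWithin (fun t => f t ^ m) (Ici 0) 0 = 0 from hD0] at h
    have hne : f 0 ^ m ≠ 0 := (Real.rpow_pos_of_pos hf0 m).ne'
    have hcomp := hG0.rpow_const (p := 1/m) (Or.inl hne)
    rw [zero_mul, zero_mul] at hcomp
    have heq : ∀ x ∈ Ici (0:ℝ), f x = (f x ^ m) ^ (1/m) := by
      intro x hx
      rw [← Real.rpow_mul (hgp.nonneg x hx), mul_one_div_cancel (by positivity : m ≠ 0),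
        Real.rpow_one]
    exact hcomp.congr heq (heq 0 self_mem_Ici)
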